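/- Fix c ≥ 1 and set v_n := (2c)^{−|n|} for n ∈ ℤ. Let V be the bounded invertible operator on ℓ²(ℤ,ℂ) with (Vf)(n) = (v_n/v_{n−1})·f(n−1). Then the spectral radius of V equals 2c and the spectral radius of V⁻¹ equals 2c. -/

import Mathlib

noncomputable section
open Real
open scoped ENNReal

/-- The Hilbert space `ℓ²(ℤ, ℂ)` of square-summable two-sided complex sequences. -/
abbrev l2 : Type := lp (fun _ : ℤ => ℂ) 2

set_option maxHeartbeats 1000000 in
lemma aux_single_norm (k : ℤ) : ‖(lp.single 2 k (1:ℂ) : l2)‖ = 1 := by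
  have := lp.norm_single (p := (2:ℝ≥0∞)) (E := fun _ : ℤ => ℂ) (by norm_num) k (1:ℂ)
  simpa using this


open Filter in
open scoped Topology in
set_option maxHeartbeats 1000000 in
lemma aux_spectral (T : l2 →L[ℂ] l2) (u : ℤ → ℝ) (d : ℤ) (C : ℝ) (hC : 0 ≤ C)
    (hu : ∀ n, u n ≠ 0)
    (hT : ∀ (f : l2) (n : ℤ), T f n = ((u n / u (n + d) : ℝ) : ℂ) * f (n + d))
    (hb : ∀ n, |u n / u (n + d)| ≤ C)
    (hs : ∀ N : ℕ, ∃ m : ℤ, C ^ N ≤ |u (m - N * d) / u m|) :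
    spectralRadius ℂ T = ENNReal.ofReal C := by
  -- action on basis vectors
  have hsingle : ∀ k : ℤ,
      T (lp.single 2 k (1:ℂ)) = ((u (k - d) / u k : ℝ) : ℂ) • lp.single 2 (k - d) (1:ℂ) := by
    intro k
    apply lp.ext
    funext n
    rw [hT, lp.coeFn_smul, Pi.smul_apply]
    by_cases h : n = k - d
    · subst h
      rw [sub_add_cancel, lp.single_apply_self, lp.single_apply_self]
      simp
    · have h2 : n + d ≠ k := fun hh => h (by omega)
      rw [lp.single_apply_ne _ _ _ h2, lp.single_apply_ne _ _ _ h, mul_zero, smul_zero]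
  -- iterated action
  have hpow : ∀ (N : ℕ) (m : ℤ),
      (T ^ N) (lp.single 2 m (1:ℂ))
        = ((u (m - N * d) / u m : ℝ) : ℂ) • lp.single 2 (m - N * d) (1:ℂ) := by
    intro N
    induction N with
    | zero =>
      intro m
      simp [div_self (hu m)]
    | succ N ih =>
      intro m
      have : (T ^ (N + 1)) (lp.single 2 m (1:ℂ))
          = T ((T ^ N) (lp.single 2 m (1:ℂ))) := by
        rw [pow_succ']
        rfl
      rw [this, ih, map_smul, hsingle]
      rw [smul_smul]
      have hcast : m - (↑(N + 1) : ℤ) * d = m - (N : ℤ) * d - d := by push_cast; ring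
      rw [hcast]
      congr 1
      push_cast
      have h1 : (u m : ℂ) ≠ 0 := by exact_mod_cast hu m
      have h2 : (u (m - (N:ℤ) * d) : ℂ) ≠ 0 := by exact_mod_cast hu _
      field_simp
  -- norm bound
  have hTnorm : ‖T‖ ≤ C := by
    refine ContinuousLinearMap.opNorm_le_bound T hC (fun f => ?_)
    have hp : 0 < ((2:ℝ≥0∞)).toReal := by norm_num
    refine lp.norm_le_of_tsum_le hp (mul_nonneg hC (norm_nonneg f)) ?_
    have hsum : Summable fun n : ℤ => ‖f n‖ ^ ((2:ℝ≥0∞)).toReal := (lp.memℓp f).summable hp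
    have hsum' : Summable fun n : ℤ => ‖f (n + d)‖ ^ ((2:ℝ≥0∞)).toReal :=
      ((Equiv.addRight d).summable_iff).mpr hsum
    have hsum'' : Summable fun n : ℤ => C ^ ((2:ℝ≥0∞)).toReal * ‖f (n + d)‖ ^ ((2:ℝ≥0∞)).toReal :=
      hsum'.mul_left _
    have hle : ∀ n : ℤ, ‖T f n‖ ^ ((2:ℝ≥0∞)).toReal
        ≤ C ^ ((2:ℝ≥0∞)).toReal * ‖f (n + d)‖ ^ ((2:ℝ≥0∞)).toReal := by
      intro n
      rw [← mul_rpow hC (norm_nonneg _)]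
      apply Real.rpow_le_rpow (norm_nonneg _) _ hp.le
      rw [hT f n]
      rw [norm_mul, Complex.norm_real, Real.norm_eq_abs]
      exact mul_le_mul_of_nonneg_right (hb n) (norm_nonneg _)
    calc ∑' n : ℤ, ‖T f n‖ ^ ((2:ℝ≥0∞)).toReal
        ≤ ∑' n : ℤ, C ^ ((2:ℝ≥0∞)).toReal * ‖f (n + d)‖ ^ ((2:ℝ≥0∞)).toReal :=
          ((lp.memℓp (T f)).summable hp).tsum_le_tsum hle hsum''
      _ = C ^ ((2:ℝ≥0∞)).toReal * ∑' n : ℤ, ‖f (n + d)‖ ^ ((2:ℝ≥0∞)).toReal := tsum_mul_left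
      _ = C ^ ((2:ℝ≥0∞)).toReal * ∑' n : ℤ, ‖f n‖ ^ ((2:ℝ≥0∞)).toReal := by
          congr 1
          exact (Equiv.addRight d).tsum_eq (fun n => ‖f n‖ ^ ((2:ℝ≥0∞)).toReal)
      _ = C ^ ((2:ℝ≥0∞)).toReal * ‖f‖ ^ ((2:ℝ≥0∞)).toReal := by
          rw [lp.norm_rpow_eq_tsum hp f]
      _ = (C * ‖f‖) ^ ((2:ℝ≥0∞)).toReal := (mul_rpow hC (norm_nonneg f)).symm
  -- exact norm of powers
  have hnormpow : ∀ N : ℕ, 1 ≤ N → ‖T ^ N‖ = C ^ N := by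
    intro N hN
    apply le_antisymm
    · calc ‖T ^ N‖ ≤ ‖T‖ ^ N := norm_pow_le' T hN
        _ ≤ C ^ N := pow_le_pow_left₀ (norm_nonneg T) hTnorm N
    · obtain ⟨m, hm⟩ := hs N
      calc C ^ N ≤ |u (m - N * d) / u m| := hm
        _ = ‖(T ^ N) (lp.single 2 m (1:ℂ))‖ := by
            rw [hpow N m, norm_smul, aux_single_norm, mul_one, Complex.norm_real,
              Real.norm_eq_abs]
        _ ≤ ‖T ^ N‖ * ‖(lp.single 2 m (1:ℂ) : l2)‖ := (T ^ N).le_opNorm _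
        _ = ‖T ^ N‖ := by rw [aux_single_norm, mul_one]
  -- Gelfand formula
  have hG := spectrum.pow_norm_pow_one_div_tendsto_nhds_spectralRadius T
  have hconst : Tendsto (fun N : ℕ => ENNReal.ofReal (‖T ^ N‖ ^ (1 / (N:ℝ))))
      atTop (𝓝 (ENNReal.ofReal C)) := by
    apply Tendsto.congr' _ tendsto_const_nhds
    filter_upwards [eventually_ge_atTop 1] with N hN
    rw [hnormpow N hN]
    rw [← Real.rpow_natCast C N, ← Real.rpow_mul hC]
    rw [mul_one_div, div_self (by exact_mod_cast Nat.one_le_iff_ne_zero.mp hN)]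
    rw [Real.rpow_one]
  exact tendsto_nhds_unique hG hconst

set_option maxHeartbeats 1000000 in
/-- For the weighted bilateral shift `V` with weights `v n = (2c)^(−|n|)` (`c ≥ 1`), the
spectral radii of `V` and of `V⁻¹` both equal `2c`. -/
theorem stmt14 (c : ℝ) (hc : 1 ≤ c)
    (v : ℤ → ℝ) (hv : ∀ n : ℤ, v n = (2 * c) ^ (-|(n : ℝ)|))
    (V : (l2 →L[ℂ] l2)ˣ)
    (hV : ∀ (f : l2) (n : ℤ),
      (V : l2 →L[ℂ] l2) f n = ((v n / v (n - 1) : ℝ) : ℂ) * f (n - 1)) :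
    spectralRadius ℂ (V : l2 →L[ℂ] l2) = ENNReal.ofReal (2 * c) ∧
    spectralRadius ℂ ((V⁻¹ : (l2 →L[ℂ] l2)ˣ) : l2 →L[ℂ] l2) = ENNReal.ofReal (2 * c) := by
  have h2c : (0:ℝ) < 2 * c := by linarith
  have h2c1 : (1:ℝ) ≤ 2 * c := by linarith
  have hvpos : ∀ n : ℤ, 0 < v n := fun n => by rw [hv]; exact Real.rpow_pos_of_pos h2c _
  have hvne : ∀ n : ℤ, v n ≠ 0 := fun n => (hvpos n).ne'
  have hratio : ∀ n m : ℤ, v n / v m = (2 * c) ^ (|(m:ℝ)| - |(n:ℝ)|) := by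
    intro n m
    rw [hv, hv, ← Real.rpow_sub h2c]
    ring_nf
  have hratio_pos : ∀ n m : ℤ, 0 < v n / v m := fun n m => div_pos (hvpos n) (hvpos m)
  -- bound on adjacent ratios
  have hbound : ∀ n m : ℤ, |(m:ℝ)| - |(n:ℝ)| ≤ 1 → |v n / v m| ≤ 2 * c := by
    intro n m hnm
    rw [abs_of_pos (hratio_pos n m), hratio]
    calc (2*c) ^ (|(m:ℝ)| - |(n:ℝ)|) ≤ (2*c) ^ (1:ℝ) :=
          Real.rpow_le_rpow_of_exponent_le h2c1 hnm
      _ = 2 * c := Real.rpow_one _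
  -- the value at 0 over ±N
  have hzero : ∀ m : ℤ, |(m:ℝ)| = ((m.natAbs : ℕ) : ℝ) → |v 0 / v m| = (2*c) ^ (m.natAbs) := by
    intro m hm
    rw [abs_of_pos (hratio_pos 0 m), hratio, hm]
    simp only [Int.cast_zero, abs_zero, sub_zero, Real.rpow_natCast]
  -- spectral radius of V
  have hVr : spectralRadius ℂ (V : l2 →L[ℂ] l2) = ENNReal.ofReal (2 * c) := by
    apply aux_spectral (V : l2 →L[ℂ] l2) v (-1) (2*c) h2c.le hvne
    · intro f n
      have : n + (-1 : ℤ) = n - 1 := by ring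
      rw [this]
      exact hV f n
    · intro n
      have : n + (-1 : ℤ) = n - 1 := by ring
      rw [this]
      apply hbound
      push_cast
      have := abs_sub_abs_le_abs_sub ((n:ℝ) - 1) (n:ℝ)
      simp at this
      linarith
    · intro N
      refine ⟨-(N:ℤ), ?_⟩
      have h1 : (-(N:ℤ) - (N:ℤ) * (-1)) = 0 := by ring
      rw [h1]
      rw [hzero (-(N:ℤ)) (by simp)]
      simp
  refine ⟨hVr, ?_⟩
  -- pointwise formula for V⁻¹
  have hVinv : ∀ (g : l2) (n : ℤ),
      ((V⁻¹ : (l2 →L[ℂ] l2)ˣ) : l2 →L[ℂ] l2) g n = ((v n / v (n + 1) : ℝ) : ℂ) * g (n + 1) := by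
    intro g n
    have hfg : (V : l2 →L[ℂ] l2) (((V⁻¹ : (l2 →L[ℂ] l2)ˣ) : l2 →L[ℂ] l2) g) = g := by
      rw [← ContinuousLinearMap.mul_apply, ← Units.val_mul, mul_inv_cancel, Units.val_one,
        ContinuousLinearMap.one_apply]
    have key := hV (((V⁻¹ : (l2 →L[ℂ] l2)ˣ) : l2 →L[ℂ] l2) g) (n + 1)
    rw [hfg] at key
    have h1 : n + 1 - 1 = n := by ring
    rw [h1] at key
    rw [key, ← mul_assoc, ← Complex.ofReal_mul]
    have : v n / v (n+1) * (v (n+1) / v n) = 1 := by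
      rw [div_mul_div_comm, mul_comm (v n), div_self (mul_ne_zero (hvne _) (hvne _))]
    rw [this]
    simp
  apply aux_spectral _ v 1 (2*c) h2c.le hvne hVinv
  · intro n
    apply hbound
    push_cast
    have := abs_sub_abs_le_abs_sub ((n:ℝ) + 1) (n:ℝ)
    simp at this
    linarith
  · intro N
    refine ⟨(N:ℤ), ?_⟩
    have h1 : ((N:ℤ) - (N:ℤ) * 1) = 0 := by ring
    rw [h1]
    rw [hzero (N:ℤ) (by simp)]
    simp
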